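/- Suppose N* ∈ M_r(𝓕) is a μ-generic matrix with invariant partition inv(N*) = ν = (ν_1 ≥ ν_2 ≥ … ≥ ν_r), and let λ = (λ_1, …, λ_r) = inv(D_μ N*). Then for every 1 ≤ s ≤ r, writing I_s = (1, 2, …, s) and H_{r−s} = (r−s+1, r−s+2, …, r), one has ‖N*_{I_s H_{r−s}}‖ = ν_{r−s+1} + ν_{r−s+2} + … + ν_r and ‖(D_μ N*)_{H_{r−s} H_{r−s}}‖ = λ_{r−s+1} + λ_{r−s+2} + … + λ_r. -/

import Mathlib

open Matrix HahnSeries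

noncomputable section

variable {K : Type*} [Field K] [CharZero K]

/-- Membership in the valuation ring `R = {a ∈ 𝓕 : a = 0 ∨ ‖a‖ ≥ 0}` of
`𝓕 = HahnSeries ℝ K`. -/
def inR (a : HahnSeries ℝ K) : Prop := a = 0 ∨ 0 ≤ a.order

/-- `M ∈ GL_r(R)`: all entries of `M` lie in `R` and `M` has a two-sided inverse with
entries in `R`. -/
def InGLR {r : ℕ} (M : Matrix (Fin r) (Fin r) (HahnSeries ℝ K)) : Prop :=
  (∀ i j, inR (M i j)) ∧
    ∃ N : Matrix (Fin r) (Fin r) (HahnSeries ℝ K),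
      (∀ i j, inR (N i j)) ∧ M * N = 1 ∧ N * M = 1

/-- The diagonal matrix `D_μ = diag(t^{μ_1}, …, t^{μ_r})`. -/
def Dmat (K : Type*) [Field K] {r : ℕ} (μ : Fin r → ℝ) :
    Matrix (Fin r) (Fin r) (HahnSeries ℝ K) :=
  Matrix.diagonal fun i => HahnSeries.single (μ i) 1

/-- `D_ν̂ = diag(t^{ν_r}, …, t^{ν_1})`. -/
def DmatHat (K : Type*) [Field K] {r : ℕ} (ν : Fin r → ℝ) :
    Matrix (Fin r) (Fin r) (HahnSeries ℝ K) :=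
  Dmat K fun i => ν i.rev

/-- `inv(M) = μ`: `μ` is weakly decreasing and `P M Q⁻¹ = D_μ` for some `P, Q ∈ GL_r(R)`. -/
def IsInv {r : ℕ} (M : Matrix (Fin r) (Fin r) (HahnSeries ℝ K)) (μ : Fin r → ℝ) : Prop :=
  Antitone μ ∧ ∃ P Q : Matrix (Fin r) (Fin r) (HahnSeries ℝ K),
    InGLR P ∧ InGLR Q ∧ P * M * Q⁻¹ = Dmat K μ

/-- `Q` is `μ`-admissible: `Q ∈ GL_r(R)` and `D_μ Q D_μ⁻¹ ∈ GL_r(R)`. -/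
def MuAdmissible {r : ℕ} (μ : Fin r → ℝ)
    (Q : Matrix (Fin r) (Fin r) (HahnSeries ℝ K)) : Prop :=
  InGLR Q ∧ InGLR (Dmat K μ * Q * (Dmat K μ)⁻¹)

/-- `T` is `ν̂`-admissible: `T ∈ GL_r(R)` and `D_ν̂⁻¹ T D_ν̂ ∈ GL_r(R)`. -/
def NuHatAdmissible {r : ℕ} (ν : Fin r → ℝ)
    (T : Matrix (Fin r) (Fin r) (HahnSeries ℝ K)) : Prop :=
  InGLR T ∧ InGLR ((DmatHat K ν)⁻¹ * T * DmatHat K ν)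

/-- The minor `W_{IJ}`: the determinant of the `k × k` submatrix of `W` on rows `I` and
columns `J`. -/
def minorDet {r k : ℕ} (W : Matrix (Fin r) (Fin r) (HahnSeries ℝ K))
    (I J : Fin k → Fin r) : HahnSeries ℝ K :=
  (W.submatrix I J).det

/-- Pair equivalence: `(A, B) = (P M Q⁻¹, Q N T⁻¹)` for some `P, Q, T ∈ GL_r(R)`. -/
def PairEquiv {r : ℕ} (M N A B : Matrix (Fin r) (Fin r) (HahnSeries ℝ K)) : Prop :=
  ∃ P Q T : Matrix (Fin r) (Fin r) (HahnSeries ℝ K),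
    InGLR P ∧ InGLR Q ∧ InGLR T ∧ A = P * M * Q⁻¹ ∧ B = Q * N * T⁻¹

/-- `N` is `μ`-generic: full rank, upper triangular, and for all index sets
`I ⊆ H ⊆ J` of equal length the minors `N_{IJ}, N_{HJ}, N_{IH}` are nonzero with
`‖N_{IJ}‖ ≤ ‖N_{HJ}‖ ≤ ‖N_{IJ}‖ + |μ_I| − |μ_H|` and `‖N_{IJ}‖ ≤ ‖N_{IH}‖`. -/
def MuGeneric {r : ℕ} (μ : Fin r → ℝ)
    (N : Matrix (Fin r) (Fin r) (HahnSeries ℝ K)) : Prop :=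
  N.det ≠ 0 ∧ (∀ i j : Fin r, j < i → N i j = 0) ∧
  ∀ (k : ℕ) (I H J : Fin k → Fin r), StrictMono I → StrictMono H → StrictMono J →
    (∀ s, I s ≤ H s) → (∀ s, H s ≤ J s) →
    minorDet N I J ≠ 0 ∧ minorDet N H J ≠ 0 ∧ minorDet N I H ≠ 0 ∧
    (minorDet N I J).order ≤ (minorDet N H J).order ∧
    (minorDet N H J).order ≤ (minorDet N I J).order + (∑ s, μ (I s)) - ∑ s, μ (H s) ∧
    (minorDet N I J).order ≤ (minorDet N I H).order

/-- `L` is `μ`-`ν̂`-generic: `L ∈ GL_r(R)`, lower triangular, and for all index sets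
`I ⊆ H ⊆ J` of equal length the relevant minors are nonzero with
`‖L_{IJ}‖ ≤ ‖L_{HJ}‖ ≤ ‖L_{IJ}‖ + |μ_I| − |μ_H|` and
`‖L_{IJ}‖ ≤ ‖L_{IH}‖ ≤ ‖L_{IJ}‖ + |ν̂_J| − |ν̂_H|`. -/
def MuNuGeneric {r : ℕ} (μ ν : Fin r → ℝ)
    (L : Matrix (Fin r) (Fin r) (HahnSeries ℝ K)) : Prop :=
  InGLR L ∧ (∀ i j : Fin r, i < j → L i j = 0) ∧
  ∀ (k : ℕ) (I H J : Fin k → Fin r), StrictMono I → StrictMono H → StrictMono J →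
    (∀ s, I s ≤ H s) → (∀ s, H s ≤ J s) →
    minorDet L I J ≠ 0 ∧ minorDet L H J ≠ 0 ∧ minorDet L I H ≠ 0 ∧
    (minorDet L I J).order ≤ (minorDet L H J).order ∧
    (minorDet L H J).order ≤ (minorDet L I J).order + (∑ s, μ (I s)) - (∑ s, μ (H s)) ∧
    (minorDet L I J).order ≤ (minorDet L I H).order ∧
    (minorDet L I H).order ≤
      (minorDet L I J).order + (∑ s, ν ((J s).rev)) - ∑ s, ν ((H s).rev)

/-- The rightmost `k` columns `(r−k+1, …, r)` of an `r × r` matrix, as a map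
`Fin k → Fin r`. -/
def lastCols (r k : ℕ) (h : k ≤ r) : Fin k → Fin r :=
  fun i => ⟨r - k + i.val, by have := i.isLt; omega⟩

/-- The set of (0-based) rows of an `r × r` matrix that remain after omitting the rows
with 1-based index in the interval `[p, q]`. -/
def keptRows (r p q : ℕ) : Finset (Fin r) :=
  (Finset.univ.filter fun x : Fin r => p ≤ x.val + 1 ∧ x.val + 1 ≤ q)ᶜ

lemma keptRows_card_le (r p q : ℕ) : (keptRows r p q).card ≤ r := by
  simpa using (keptRows r p q).card_le_univ

/-- `‖((p)^∧, …, (q)^∧)‖` for the matrix `N`: the order of the minor of `N` on the rows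
`{1, …, r} ∖ {p, …, q}` (1-based) and the rightmost columns; when `p > q` no row is
omitted and this is `‖det N‖`. -/
def hatOrd {r : ℕ} (N : Matrix (Fin r) (Fin r) (HahnSeries ℝ K)) (p q : ℕ) : ℝ :=
  (minorDet N (fun i => ((keptRows r p q).orderIsoOfFin rfl i).1)
    (lastCols r (keptRows r p q).card (keptRows_card_le r p q))).order

/-- `k` is the right filling of a pair `(M, N)` with `inv(M) = μ`: there is a
`μ`-generic matrix `N*` with `(D_μ, N*)` pair-equivalent to `(M, N)` such that `k`
satisfies the determinantal formula
`k_{1j} + ⋯ + k_{ij} = ‖((j−i)^∧, …, (j−1)^∧)‖ − ‖((j−i+1)^∧, …, (j)^∧)‖`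
(all indices written 1-based). -/
def RightFillingOf {r : ℕ} (μ : Fin r → ℝ)
    (M N : Matrix (Fin r) (Fin r) (HahnSeries ℝ K))
    (k : Fin r → Fin r → ℝ) : Prop :=
  ∃ Nstar : Matrix (Fin r) (Fin r) (HahnSeries ℝ K),
    MuGeneric μ Nstar ∧ PairEquiv M N (Dmat K μ) Nstar ∧
    ∀ i j : Fin r, i ≤ j →
      ∑ s ∈ Finset.Iic i, k s j =
        hatOrd Nstar (j.val - i.val) j.val - hatOrd Nstar (j.val - i.val + 1) (j.val + 1)

/-- The left filling of `(M, N)` is the right filling of the transposed pair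
`(Nᵀ, Mᵀ)`. -/
def LeftFillingOf {r : ℕ} (ν : Fin r → ℝ)
    (M N : Matrix (Fin r) (Fin r) (HahnSeries ℝ K))
    (m : Fin r → Fin r → ℝ) : Prop :=
  RightFillingOf ν Nᵀ Mᵀ m

/-- `{k_ij : 1 ≤ i ≤ j ≤ r}` (indexed 0-based here) is an `L𝕉` filling of type
`(μ, ν; λ)`: the conditions (LR1)–(LR4). -/
def IsLRFilling {r : ℕ} (μ ν lam : Fin r → ℝ) (k : Fin r → Fin r → ℝ) : Prop :=
  (∀ j : Fin r, μ j + ∑ s ∈ Finset.Iic j, k s j = lam j) ∧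
  (∀ i : Fin r, ∑ s ∈ Finset.Ici i, k i s = ν i) ∧
  (∀ i j : Fin r, i < j → 0 ≤ k i j) ∧
  (∀ (i j : ℕ) (hi : i < r) (hj : j < r), i ≤ j → 1 ≤ j →
    μ ⟨j, hj⟩ + ∑ s ∈ Finset.Iic (⟨i, hi⟩ : Fin r), k s ⟨j, hj⟩ ≤
      μ ⟨j - 1, by omega⟩ + ∑ s ∈ Finset.Iio (⟨i, hi⟩ : Fin r), k s ⟨j - 1, by omega⟩) ∧
  (∀ (i j : ℕ) (hij : i ≤ j) (hj : j + 1 < r),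
    ∑ s ∈ Finset.Icc (⟨i + 1, by omega⟩ : Fin r) ⟨j + 1, hj⟩, k ⟨i + 1, by omega⟩ s ≤
      ∑ s ∈ Finset.Icc (⟨i, by omega⟩ : Fin r) ⟨j, by omega⟩, k ⟨i, by omega⟩ s)


set_option linter.unusedSectionVars false
set_option maxHeartbeats 1000000
local notation "𝕍" => HahnSeries.addVal ℝ K

lemma vprod {ι : Type*} (s : Finset ι) (f : ι → HahnSeries ℝ K) :
    𝕍 (∏ i ∈ s, f i) = ∑ i ∈ s, 𝕍 (f i) := by
  classical
  induction s using Finset.cons_induction with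
  | empty => simp [AddValuation.map_one]
  | cons a s ha ih => rw [Finset.prod_cons, Finset.sum_cons, AddValuation.map_mul, ih]

lemma vprod_nonneg {ι : Type*} (s : Finset ι) (f : ι → HahnSeries ℝ K)
    (h : ∀ i ∈ s, 0 ≤ 𝕍 (f i)) : 0 ≤ 𝕍 (∏ i ∈ s, f i) := by
  rw [vprod]; exact Finset.sum_nonneg h

lemma v_sign_smul (u : ℤˣ) (x : HahnSeries ℝ K) : 𝕍 (((u : ℤ) : HahnSeries ℝ K) * x) = 𝕍 x := by
  rcases Int.units_eq_one_or u with h | h <;> subst h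
  · simp
  · have : (((-1 : ℤˣ) : ℤ) : HahnSeries ℝ K) * x = -x := by push_cast; ring
    rw [this, AddValuation.map_neg]

lemma vdet {s : ℕ} (M : Matrix (Fin s) (Fin s) (HahnSeries ℝ K))
    (h : ∀ i j, 0 ≤ 𝕍 (M i j)) : 0 ≤ 𝕍 M.det := by
  rw [Matrix.det_apply']
  refine AddValuation.map_le_sum _ fun σ _ => ?_
  rw [v_sign_smul]
  exact vprod_nonneg _ _ fun i _ => h _ _

/-- Row expansion: `det (X*Y)` as a sum over arbitrary functions. -/
lemma det_mul_expand_rows {s r : ℕ} {R : Type*} [CommRing R]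
    (X : Matrix (Fin s) (Fin r) R) (Y : Matrix (Fin r) (Fin s) R) :
    (X * Y).det = ∑ g : Fin s → Fin r, (∏ i, X i (g i)) * (Y.submatrix g id).det := by
  have hXY : (X * Y) = Matrix.of fun i => ∑ c, X i c • Y c := by
    ext i j
    simp [Matrix.mul_apply]
  rw [hXY]
  have := (Matrix.detRowAlternating :
      (Fin s → R) [⋀^Fin s]→ₗ[R] R).toMultilinearMap.map_sum
    (fun (i : Fin s) (c : Fin r) => X i c • Y c)
  rw [show Matrix.det (Matrix.of fun i => ∑ c, X i c • Y c) =
      (Matrix.detRowAlternating : (Fin s → R) [⋀^Fin s]→ₗ[R] R).toMultilinearMap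
        (fun i => ∑ c, X i c • Y c) from rfl, this]
  refine Finset.sum_congr rfl fun g _ => ?_
  rw [MultilinearMap.map_smul_univ]
  simp [smul_eq_mul]
  rfl

lemma det_mul_expand_cols {s r : ℕ} {R : Type*} [CommRing R]
    (X : Matrix (Fin s) (Fin r) R) (Y : Matrix (Fin r) (Fin s) R) :
    (X * Y).det = ∑ g : Fin s → Fin r, (X.submatrix id g).det * (∏ i, Y (g i) i) := by
  rw [← Matrix.det_transpose, Matrix.transpose_mul, det_mul_expand_rows]
  refine Finset.sum_congr rfl fun g _ => ?_
  rw [mul_comm, ← Matrix.transpose_submatrix, Matrix.det_transpose]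
  rfl
lemma lastCols_strictMono {r k : ℕ} (h : k ≤ r) : StrictMono (lastCols r k h) := by
  intro i j hij
  simp only [lastCols, Fin.mk_lt_mk, Fin.lt_def] at *
  omega

/-- Strict mono step bound. -/
lemma strictMono_val_add {s r : ℕ} {f : Fin s → Fin r} (hf : StrictMono f) :
    ∀ (d : ℕ) (i j : Fin s), i.val + d = j.val → (f i).val + d ≤ (f j).val := by
  intro d
  induction d with
  | zero => intro i j hij; have : i = j := Fin.ext (by omega); simp [this]
  | succ d ih =>
    intro i j hij
    have hj' : i.val + d < s := by have := j.isLt; omega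
    have h1 := ih i ⟨i.val + d, hj'⟩ rfl
    have h2 : f ⟨i.val + d, hj'⟩ < f j := hf (by simp [Fin.lt_def]; omega)
    have := Fin.lt_def.mp h2
    omega

lemma strictMono_le_lastCols {s r : ℕ} {f : Fin s → Fin r} (hf : StrictMono f) (i : Fin s) :
    (f i).val ≤ r - s + i.val := by
  have hs : i.val < s := i.isLt
  have hlast : s - 1 < s := by omega
  have h1 := strictMono_val_add hf (s - 1 - i.val) i ⟨s - 1, hlast⟩ (by simp; omega)
  have h2 := (f ⟨s - 1, hlast⟩).isLt
  omega

lemma le_strictMono_apply {s r : ℕ} {f : Fin s → Fin r} (hf : StrictMono f) (i : Fin s) :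
    i.val ≤ (f i).val := by
  have h0 : (0 : ℕ) < s := by have := i.isLt; omega
  have := strictMono_val_add hf i.val ⟨0, h0⟩ i (by simp)
  omega

/-- Minor of an upper triangular matrix with a row index exceeding a column index is zero. -/
lemma uptri_minor_zero {s r : ℕ} {R : Type*} [CommRing R]
    (N : Matrix (Fin r) (Fin r) R) (hN : ∀ i j : Fin r, j < i → N i j = 0)
    {C D : Fin s → Fin r} (hC : Monotone C) (hD : Monotone D)
    {k : Fin s} (hk : D k < C k) : (N.submatrix C D).det = 0 := by
  rw [Matrix.det_apply']
  refine Finset.sum_eq_zero fun σ _ => ?_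
  have hex : ∃ x : Fin s, x ≤ k ∧ k ≤ σ x := by
    by_contra hall
    push_neg at hall
    have hinj : Function.Injective
        (fun y : Fin (k.val + 1) => (⟨(σ ⟨y.val, by have := y.isLt; have := k.isLt; omega⟩).val,
          by
            have h1 := hall ⟨y.val, by have := y.isLt; have := k.isLt; omega⟩
              (by rw [Fin.le_def]; simpa using Nat.lt_succ_iff.mp y.isLt)
            rw [Fin.lt_def] at h1
            exact h1⟩ : Fin k.val)) := by
      intro y1 y2 h
      simp only [Fin.mk.injEq] at h
      have := σ.injective (Fin.ext h)
      simpa [Fin.ext_iff] using this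
    have := Fintype.card_le_of_injective _ hinj
    simp at this
  obtain ⟨x, hx1, hx2⟩ := hex
  have hzero : N (C (σ x)) (D x) = 0 := by
    refine hN _ _ ?_
    calc D x ≤ D k := hD hx1
      _ < C k := hk
      _ ≤ C (σ x) := hC hx2
  rw [Finset.prod_eq_zero (Finset.mem_univ x) (by simpa using hzero), mul_zero]

/-- Sum of an antitone function over an injective tuple is at least the sum over the last indices. -/
lemma sum_antitone_le {s r : ℕ} (hsr : s ≤ r) (ν : Fin r → ℝ) (hν : Antitone ν)
    (g : Fin s → Fin r) (hg : Function.Injective g) :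
    (∑ i, ν (lastCols r s hsr i)) ≤ ∑ i, ν (g i) := by
  classical
  set S : Finset (Fin r) := Finset.univ.image g with hS
  have hcard : S.card = s := by
    rw [hS, Finset.card_image_of_injective _ hg, Finset.card_univ, Fintype.card_fin]
  set e := S.orderIsoOfFin hcard with he
  have hsum : ∑ i, ν (g i) = ∑ i : Fin s, ν (e i) := by
    rw [← Finset.sum_image (g := g) (f := ν) (fun x _ y _ h => hg h)]
    rw [← Finset.sum_coe_sort]
    exact Fintype.sum_equiv e.toEquiv.symm _ _ (fun x => by simp)
  rw [hsum]
  refine Finset.sum_le_sum fun i _ => ?_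
  refine hν ?_
  have hmono : StrictMono (fun i : Fin s => (e i : Fin r)) := fun a b hab => e.strictMono hab
  have := strictMono_le_lastCols hmono i
  simp only [Fin.le_def, lastCols]
  omega

/-- Sort an injective tuple. -/
lemma exists_sorted {s r : ℕ} (g : Fin s → Fin r) (hg : Function.Injective g) :
    ∃ (g' : Fin s → Fin r) (σ : Equiv.Perm (Fin s)), StrictMono g' ∧ g = g' ∘ σ := by
  classical
  set S : Finset (Fin r) := Finset.univ.image g with hS
  have hcard : S.card = s := by
    rw [hS, Finset.card_image_of_injective _ hg, Finset.card_univ, Fintype.card_fin]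
  set e := S.orderIsoOfFin hcard with he
  have hmem : ∀ i, g i ∈ S := fun i => Finset.mem_image_of_mem _ (Finset.mem_univ i)
  set τ : Fin s → Fin s := fun i => e.symm ⟨g i, hmem i⟩ with hτ
  have hτinj : Function.Injective τ := by
    intro a b h
    apply hg
    have h2 : (⟨g a, hmem a⟩ : {x // x ∈ S}) = ⟨g b, hmem b⟩ := e.symm.injective h
    simpa using congrArg Subtype.val h2
  have hτbij : Function.Bijective τ := Finite.injective_iff_bijective.mp hτinj
  refine ⟨fun i => (e i : Fin r), Equiv.ofBijective τ hτbij, fun a b hab => e.strictMono hab, ?_⟩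
  funext i
  simp only [Function.comp_apply, Equiv.ofBijective_apply, hτ]
  simp

lemma inR_iff (a : HahnSeries ℝ K) : inR a ↔ 0 ≤ 𝕍 a := by
  rw [HahnSeries.addVal_apply, HahnSeries.zero_le_orderTop_iff]
  constructor
  · rintro (rfl | h)
    · simp [HahnSeries.order_zero]
    · exact h
  · exact fun h => Or.inr h

lemma coe_sum_withTop {ι : Type*} (s : Finset ι) (f : ι → ℝ) :
    ((∑ i ∈ s, f i : ℝ) : WithTop ℝ) = ∑ i ∈ s, ((f i : ℝ) : WithTop ℝ) := by
  classical
  induction s using Finset.cons_induction with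
  | empty => simp
  | cons a s ha ih => rw [Finset.sum_cons, Finset.sum_cons, WithTop.coe_add, ih]

lemma v_single (a : ℝ) : 𝕍 (HahnSeries.single a (1 : K)) = (a : WithTop ℝ) := by
  rw [HahnSeries.addVal_apply, HahnSeries.orderTop_single one_ne_zero]

/-- Decomposition extracted from `IsInv`. -/
lemma isInv_decomp {r : ℕ} {M : Matrix (Fin r) (Fin r) (HahnSeries ℝ K)} {ν : Fin r → ℝ}
    (h : IsInv M ν) :
    ∃ P P' Q Q' : Matrix (Fin r) (Fin r) (HahnSeries ℝ K),
      (∀ i j, 0 ≤ 𝕍 (P i j)) ∧ (∀ i j, 0 ≤ 𝕍 (P' i j)) ∧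
      (∀ i j, 0 ≤ 𝕍 (Q i j)) ∧ (∀ i j, 0 ≤ 𝕍 (Q' i j)) ∧
      M = P' * (Dmat K ν * Q) ∧ Dmat K ν = P * (M * Q') := by
  obtain ⟨hν, P, Q, ⟨hPe, NP, hNPe, hPNP, hNPP⟩, ⟨hQe, NQ, hNQe, hQNQ, hNQQ⟩, heq⟩ := h
  have hQinv : Q⁻¹ = NQ := Matrix.inv_eq_left_inv hNQQ
  rw [hQinv] at heq
  refine ⟨P, NP, Q, NQ,
    fun i j => (inR_iff _).mp (hPe i j), fun i j => (inR_iff _).mp (hNPe i j),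
    fun i j => (inR_iff _).mp (hQe i j), fun i j => (inR_iff _).mp (hNQe i j), ?_, ?_⟩
  · rw [← heq]
    calc M = NP * P * M * (NQ * Q) := by rw [hNPP, hNQQ, Matrix.one_mul, Matrix.mul_one]
      _ = NP * (P * M * NQ * Q) := by simp only [Matrix.mul_assoc]
  · rw [← heq]
    exact Matrix.mul_assoc P M NQ
lemma Dmul_submatrix {r s : ℕ} (μ : Fin r → ℝ) (N : Matrix (Fin r) (Fin r) (HahnSeries ℝ K))
    (C D : Fin s → Fin r) :
    (Dmat K μ * N).submatrix C D =
      Matrix.diagonal (fun i => HahnSeries.single (μ (C i)) (1 : K)) * N.submatrix C D := by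
  ext i j
  simp [Dmat, Matrix.diagonal_mul, Matrix.submatrix_apply]

lemma det_Dmul_submatrix {r s : ℕ} (μ : Fin r → ℝ) (N : Matrix (Fin r) (Fin r) (HahnSeries ℝ K))
    (C D : Fin s → Fin r) :
    ((Dmat K μ * N).submatrix C D).det =
      (∏ i, HahnSeries.single (μ (C i)) (1 : K)) * (N.submatrix C D).det := by
  rw [Dmul_submatrix, Matrix.det_mul, Matrix.det_diagonal]

lemma v_prod_single {s : ℕ} (f : Fin s → ℝ) :
    𝕍 (∏ i, HahnSeries.single (f i) (1 : K)) = ((∑ i, f i : ℝ) : WithTop ℝ) := by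
  rw [vprod, coe_sum_withTop]
  exact Finset.sum_congr rfl fun i _ => v_single (K := K) (f i)

/-- Step B, lower bound: every minor of `M` with `inv M = ν` has valuation at least
the sum of the smallest `s` parts of `ν`. -/
lemma v_minor_ge {r s : ℕ} (hsr : s ≤ r) {M P' Q : Matrix (Fin r) (Fin r) (HahnSeries ℝ K)}
    {ν : Fin r → ℝ} (hν : Antitone ν)
    (hP' : ∀ i j, 0 ≤ 𝕍 (P' i j)) (hQ : ∀ i j, 0 ≤ 𝕍 (Q i j))
    (hdec : M = P' * (Dmat K ν * Q)) (C D : Fin s → Fin r) :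
    ((∑ i, ν (lastCols r s hsr i) : ℝ) : WithTop ℝ) ≤ 𝕍 (M.submatrix C D).det := by
  rw [hdec, Matrix.submatrix_mul _ _ _ id _ Function.bijective_id, det_mul_expand_rows]
  refine AddValuation.map_le_sum _ fun g _ => ?_
  rw [Matrix.submatrix_submatrix]
  simp only [Function.comp_id, Function.id_comp]
  by_cases hg : Function.Injective g
  · rw [AddValuation.map_mul]
    have h1 : (0 : WithTop ℝ) ≤ 𝕍 (∏ i, P'.submatrix C id i (g i)) :=
      vprod_nonneg _ _ fun i _ => hP' _ _
    have hfac : (Dmat K ν * Q).submatrix g D =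
        Matrix.diagonal (fun i => HahnSeries.single (ν (g i)) (1 : K)) * Q.submatrix g D :=
      Dmul_submatrix ν Q g D
    rw [hfac, Matrix.det_mul, Matrix.det_diagonal, AddValuation.map_mul, v_prod_single]
    have h2 : (0 : WithTop ℝ) ≤ 𝕍 (Q.submatrix g D).det :=
      vdet _ fun i j => hQ _ _
    have h3 : ((∑ i, ν (lastCols r s hsr i) : ℝ) : WithTop ℝ) ≤ ((∑ i, ν (g i) : ℝ) : WithTop ℝ) :=
      WithTop.coe_le_coe.mpr (sum_antitone_le hsr ν hν g hg)
    calc ((∑ i, ν (lastCols r s hsr i) : ℝ) : WithTop ℝ)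
        ≤ ((∑ i, ν (g i) : ℝ) : WithTop ℝ) := h3
      _ ≤ ((∑ i, ν (g i) : ℝ) : WithTop ℝ) + 𝕍 (Q.submatrix g D).det := le_add_of_nonneg_right h2
      _ ≤ 𝕍 (∏ i, P'.submatrix C id i (g i)) +
          (((∑ i, ν (g i) : ℝ) : WithTop ℝ) + 𝕍 (Q.submatrix g D).det) := le_add_of_nonneg_left h1
  · obtain ⟨a, b, hab, hne⟩ : ∃ a b, g a = g b ∧ a ≠ b := by
      rw [Function.Injective] at hg; push_neg at hg
      obtain ⟨a, b, h1, h2⟩ := hg; exact ⟨a, b, h1, h2⟩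
    have : ((Dmat K ν * Q).submatrix g D).det = 0 :=
      Matrix.det_zero_of_row_eq hne (by ext j; simp [Matrix.submatrix_apply, hab])
    rw [this, mul_zero]
    simp [AddValuation.map_zero]

/-- Step B, upper bound: some strictly monotone minor of `M` has valuation at most
the sum of the smallest `s` parts of `ν`. -/
lemma exists_minor_le {r s : ℕ} (hsr : s ≤ r) {M P Q' : Matrix (Fin r) (Fin r) (HahnSeries ℝ K)}
    {ν : Fin r → ℝ}
    (hP : ∀ i j, 0 ≤ 𝕍 (P i j)) (hQ' : ∀ i j, 0 ≤ 𝕍 (Q' i j))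
    (hdec : Dmat K ν = P * (M * Q')) :
    ∃ C D : Fin s → Fin r, StrictMono C ∧ StrictMono D ∧
      𝕍 (M.submatrix C D).det ≤ ((∑ i, ν (lastCols r s hsr i) : ℝ) : WithTop ℝ) := by
  set σv : WithTop ℝ := ((∑ i, ν (lastCols r s hsr i) : ℝ) : WithTop ℝ) with hσv
  by_contra hcon
  push_neg at hcon
  -- every minor (arbitrary index functions) has valuation > σv
  have hall : ∀ g h : Fin s → Fin r, σv < 𝕍 (M.submatrix g h).det := by
    intro g h
    by_cases hg : Function.Injective g
    · by_cases hh : Function.Injective h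
      · obtain ⟨g', σ₁, hg', hgeq⟩ := exists_sorted g hg
        obtain ⟨h', σ₂, hh', hheq⟩ := exists_sorted h hh
        have hsub : M.submatrix g h = ((M.submatrix g' h').submatrix σ₁ id).submatrix id σ₂ := by
          rw [Matrix.submatrix_submatrix, Matrix.submatrix_submatrix, hgeq, hheq]
          rfl
        rw [hsub, Matrix.det_permute', Matrix.det_permute, v_sign_smul, v_sign_smul]
        exact hcon g' h' hg' hh'
      · obtain ⟨a, b, hab, hne⟩ : ∃ a b, h a = h b ∧ a ≠ b := by
          rw [Function.Injective] at hh; push_neg at hh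
          obtain ⟨a, b, h1, h2⟩ := hh; exact ⟨a, b, h1, h2⟩
        have : (M.submatrix g h).det = 0 :=
          Matrix.det_zero_of_column_eq hne fun k => by simp [Matrix.submatrix_apply, hab]
        rw [this]
        simp only [AddValuation.map_zero]
        exact WithTop.coe_lt_top _
    · obtain ⟨a, b, hab, hne⟩ : ∃ a b, g a = g b ∧ a ≠ b := by
        rw [Function.Injective] at hg; push_neg at hg
        obtain ⟨a, b, h1, h2⟩ := hg; exact ⟨a, b, h1, h2⟩
      have : (M.submatrix g h).det = 0 :=
        Matrix.det_zero_of_row_eq hne (by ext j; simp [Matrix.submatrix_apply, hab])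
      rw [this]
      simp only [AddValuation.map_zero]
      exact WithTop.coe_lt_top _
  -- the corner minor of `Dmat ν` has valuation exactly σv
  set L := lastCols r s hsr with hL
  have hLinj : Function.Injective L := (lastCols_strictMono hsr).injective
  have hcorner : (Dmat K ν).submatrix L L =
      Matrix.diagonal (fun i => HahnSeries.single (ν (L i)) (1 : K)) := by
    ext i j
    by_cases hij : i = j
    · subst hij; simp [Dmat, Matrix.submatrix_apply, Matrix.diagonal]
    · have : L i ≠ L j := fun hc => hij (hLinj hc)
      simp [Dmat, Matrix.submatrix_apply, Matrix.diagonal, hij, this]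
  have hvcorner : 𝕍 ((Dmat K ν).submatrix L L).det = σv := by
    rw [hcorner, Matrix.det_diagonal, v_prod_single]
  -- but via the decomposition it is > σv
  have hgt : σv < 𝕍 ((Dmat K ν).submatrix L L).det := by
    rw [hdec, Matrix.submatrix_mul _ _ _ id _ Function.bijective_id, det_mul_expand_rows]
    refine AddValuation.map_lt_sum' _ (WithTop.coe_lt_top _) fun g _ => ?_
    rw [Matrix.submatrix_submatrix]
    simp only [Function.comp_id, Function.id_comp]
    have hfac : (M * Q').submatrix g L =
        (M.submatrix g id) * (Q'.submatrix id L) :=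
      Matrix.submatrix_mul _ _ _ id _ Function.bijective_id
    rw [AddValuation.map_mul, hfac, det_mul_expand_cols]
    have hinner : σv < 𝕍 (∑ h : Fin s → Fin r,
        ((M.submatrix g id).submatrix id h).det * ∏ i, (Q'.submatrix id L) (h i) i) := by
      refine AddValuation.map_lt_sum' _ (WithTop.coe_lt_top _) fun h _ => ?_
      rw [AddValuation.map_mul, Matrix.submatrix_submatrix]
      simp only [Function.comp_id, Function.id_comp]
      calc σv < 𝕍 (M.submatrix g h).det := hall g h
        _ ≤ 𝕍 (M.submatrix g h).det + 𝕍 (∏ i, Q'.submatrix id L (h i) i) :=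
          le_add_of_nonneg_right (vprod_nonneg _ _ fun i _ => hQ' _ _)
    calc σv < 𝕍 (∑ h : Fin s → Fin r,
          ((M.submatrix g id).submatrix id h).det * ∏ i, (Q'.submatrix id L) (h i) i) := hinner
      _ ≤ 𝕍 (∏ i, P.submatrix L id i (g i)) + 𝕍 (∑ h : Fin s → Fin r,
          ((M.submatrix g id).submatrix id h).det * ∏ i, (Q'.submatrix id L) (h i) i) :=
        le_add_of_nonneg_left (vprod_nonneg _ _ fun i _ => hP _ _)
  rw [hvcorner] at hgt
  exact lt_irrefl _ hgt


/-- For a `μ`-generic `N*` with `inv(N*) = ν` and `inv(D_μ N*) = λ`,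
the minor of `N*` on rows `(1, …, s)` and columns `(r−s+1, …, r)` has order
`ν_{r−s+1} + ⋯ + ν_r`, and the minor of `D_μ N*` on rows and columns `(r−s+1, …, r)` has
order `λ_{r−s+1} + ⋯ + λ_r`. -/
theorem mu_generic_corner_minors {r : ℕ} (μ ν lam : Fin r → ℝ) (hμ : Antitone μ)
    (N : Matrix (Fin r) (Fin r) (HahnSeries ℝ K)) (hN : MuGeneric μ N)
    (hinvN : IsInv N ν) (hinvDN : IsInv (Dmat K μ * N) lam) :
    ∀ (s : ℕ) (hs1 : 1 ≤ s) (hsr : s ≤ r),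
      (minorDet N (fun i : Fin s => Fin.castLE hsr i) (lastCols r s hsr)).order
          = (∑ i : Fin s, ν (lastCols r s hsr i)) ∧
      (minorDet (Dmat K μ * N) (lastCols r s hsr) (lastCols r s hsr)).order
          = ∑ i : Fin s, lam (lastCols r s hsr i) := by
  intro s hs1 hsr
  simp only [minorDet]
  obtain ⟨hdet, htri, hgen⟩ := hN
  set L : Fin s → Fin r := lastCols r s hsr with hLdef
  set E : Fin s → Fin r := fun i : Fin s => Fin.castLE hsr i with hEdef
  have hLmono : StrictMono L := lastCols_strictMono hsr
  have hEmono : StrictMono E := fun a b hab => by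
    simpa [hEdef] using (Fin.strictMono_castLE hsr) hab
  have hEL : ∀ i, E i ≤ L i := fun i => by
    simp only [hEdef, hLdef, Fin.le_def, Fin.coe_castLE, lastCols]
    omega
  have hEle : ∀ (C : Fin s → Fin r), StrictMono C → ∀ i, E i ≤ C i := by
    intro C hC i
    have := le_strictMono_apply hC i
    simp only [hEdef, Fin.le_def, Fin.coe_castLE]
    omega
  have hleL : ∀ (D : Fin s → Fin r), StrictMono D → ∀ i, D i ≤ L i := by
    intro D hD i
    have := strictMono_le_lastCols hD i
    simp only [hLdef, Fin.le_def, lastCols]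
    omega
  constructor
  · -- Part 1
    obtain ⟨P, P', Q, Q', hP, hP', hQ, hQ', hdec1, hdec2⟩ := isInv_decomp hinvN
    have hge : ((∑ i, ν (L i) : ℝ) : WithTop ℝ) ≤ 𝕍 (N.submatrix E L).det :=
      v_minor_ge hsr hinvN.1 hP' hQ hdec1 E L
    obtain ⟨C, D, hC, hD, hle⟩ := exists_minor_le (s := s) hsr hP hQ' hdec2
    have hCD0 : (N.submatrix C D).det ≠ 0 := by
      intro h0
      rw [h0] at hle
      simp only [AddValuation.map_zero] at hle
      exact WithTop.not_top_le_coe _ hle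
    have hCD : ∀ i, C i ≤ D i := by
      by_contra hcon
      push_neg at hcon
      obtain ⟨k, hk⟩ := hcon
      exact hCD0 (uptri_minor_zero N htri hC.monotone hD.monotone hk)
    have gen1 := hgen s E C D hEmono hC hD (hEle C hC) hCD
    simp only [minorDet] at gen1
    have gen2 := hgen s E D L hEmono hD hLmono
      (fun i => le_trans (hEle C hC i) (hCD i)) (hleL D hD)
    simp only [minorDet] at gen2
    have hordCD : ((N.submatrix C D).det).order ≤ ∑ i, ν (L i) := by
      have h1 : 𝕍 ((N.submatrix C D).det) ≤ ((∑ i, ν (L i) : ℝ) : WithTop ℝ) := hle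
      rw [HahnSeries.addVal_apply, ← HahnSeries.order_eq_orderTop_of_ne_zero hCD0] at h1
      exact_mod_cast h1
    have hEL0 : (N.submatrix E L).det ≠ 0 := gen2.1
    have hup : ((N.submatrix E L).det).order ≤ ∑ i, ν (L i) :=
      le_trans gen2.2.2.2.2.2 (le_trans gen1.2.2.2.1 hordCD)
    have hlow : (∑ i, ν (L i) : ℝ) ≤ ((N.submatrix E L).det).order := by
      have h1 := hge
      rw [HahnSeries.addVal_apply, ← HahnSeries.order_eq_orderTop_of_ne_zero hEL0] at h1
      exact_mod_cast h1
    exact le_antisymm hup hlow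
  · -- Part 2
    obtain ⟨P, P', Q, Q', hP, hP', hQ, hQ', hdec1, hdec2⟩ := isInv_decomp hinvDN
    have hge : ((∑ i, lam (L i) : ℝ) : WithTop ℝ) ≤ 𝕍 ((Dmat K μ * N).submatrix L L).det :=
      v_minor_ge hsr hinvDN.1 hP' hQ hdec1 L L
    obtain ⟨C, D, hC, hD, hle⟩ := exists_minor_le (s := s) hsr hP hQ' hdec2
    have hdetCD : ((Dmat K μ * N).submatrix C D).det =
        (∏ i, HahnSeries.single (μ (C i)) (1 : K)) * (N.submatrix C D).det :=
      det_Dmul_submatrix μ N C D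
    have hNCD0 : (N.submatrix C D).det ≠ 0 := by
      intro h0
      rw [hdetCD, h0, mul_zero] at hle
      simp only [AddValuation.map_zero] at hle
      exact WithTop.not_top_le_coe _ hle
    have hCD : ∀ i, C i ≤ D i := by
      by_contra hcon
      push_neg at hcon
      obtain ⟨k, hk⟩ := hcon
      exact hNCD0 (uptri_minor_zero N htri hC.monotone hD.monotone hk)
    have genA := hgen s C D L hC hD hLmono hCD (hleL D hD)
    simp only [minorDet] at genA
    have genB := hgen s D L L hD hLmono hLmono (hleL D hD) (fun i => le_refl _)
    simp only [minorDet] at genB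
    -- valuation of the (C,D) minor of Dμ N
    have hvCD : 𝕍 ((Dmat K μ * N).submatrix C D).det =
        (((∑ i, μ (C i)) + ((N.submatrix C D).det).order : ℝ) : WithTop ℝ) := by
      rw [hdetCD, AddValuation.map_mul, v_prod_single (K := K),
        HahnSeries.addVal_apply, ← HahnSeries.order_eq_orderTop_of_ne_zero hNCD0]
      exact_mod_cast (WithTop.coe_add _ _).symm
    have hordCD : (∑ i, μ (C i)) + ((N.submatrix C D).det).order ≤ ∑ i, lam (L i) := by
      rw [hvCD] at hle
      exact_mod_cast hle
    -- chain of genericity inequalities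
    have ha : ((N.submatrix C L).det).order ≤ ((N.submatrix C D).det).order := genA.2.2.2.2.2
    have hb : ((N.submatrix D L).det).order ≤
        ((N.submatrix C L).det).order + (∑ i, μ (C i)) - ∑ i, μ (D i) := genA.2.2.2.2.1
    have hc : ((N.submatrix L L).det).order ≤
        ((N.submatrix D L).det).order + (∑ i, μ (D i)) - ∑ i, μ (L i) := genB.2.2.2.2.1
    have hLL0 : (N.submatrix L L).det ≠ 0 := genB.2.1
    have hvLL : 𝕍 ((Dmat K μ * N).submatrix L L).det =
        (((∑ i, μ (L i)) + ((N.submatrix L L).det).order : ℝ) : WithTop ℝ) := by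
      rw [det_Dmul_submatrix μ N L L, AddValuation.map_mul, v_prod_single (K := K),
        HahnSeries.addVal_apply, ← HahnSeries.order_eq_orderTop_of_ne_zero hLL0]
      exact_mod_cast (WithTop.coe_add _ _).symm
    have hMLL0 : ((Dmat K μ * N).submatrix L L).det ≠ 0 := by
      intro h0
      have := hvLL
      rw [h0] at this
      simp only [AddValuation.map_zero] at this
      exact (WithTop.coe_ne_top (a := ((∑ i, μ (L i)) + ((N.submatrix L L).det).order : ℝ))) this.symm
    have hup : (∑ i, μ (L i)) + ((N.submatrix L L).det).order ≤ ∑ i, lam (L i) := by linarith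
    have hlow : (∑ i, lam (L i) : ℝ) ≤ (∑ i, μ (L i)) + ((N.submatrix L L).det).order := by
      rw [hvLL] at hge
      exact_mod_cast hge
    have hfinal : 𝕍 (((Dmat K μ * N).submatrix L L).det) = ((∑ i, lam (L i) : ℝ) : WithTop ℝ) := by
      rw [hvLL]
      exact_mod_cast congrArg (fun x : ℝ => (x : WithTop ℝ)) (le_antisymm hup hlow)
    rw [HahnSeries.addVal_apply, ← HahnSeries.order_eq_orderTop_of_ne_zero hMLL0] at hfinal
    exact_mod_cast hfinal


end
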